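/- In ℝ[S_4], let ι : ℝ[S_3] → ℝ[S_4] be the algebra embedding induced by the group embedding S_3 → S_4 that fixes 4. Then the element ρ := y_t*·ι(η) is nonzero, and for ν ∈ ℝ the element σ_ν := y_t*·ι(ξ_ν) is nonzero if and only if ν ≠ 1/2. -/

import Mathlib

/-- The star map `a* := Σ_p a(p)·p⁻¹` on the group ring `ℝ[S_r]`. -/
noncomputable def astar {r : ℕ} (a : MonoidAlgebra ℝ (Equiv.Perm (Fin r))) :
    MonoidAlgebra ℝ (Equiv.Perm (Fin r)) :=
  MonoidAlgebra.ofCoeff (Finsupp.equivFunOnFinite.symm (fun p => a.coeff p⁻¹))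
/-- The Young symmetrizer `y_t = Σ_{p∈H_t} Σ_{q∈V_t} sign(q)·(p∘q)` of the tableau with
rows `{1,3}`, `{2,4}` (indices `0`-based in `Fin 4`):
`H_t = {id, (1 3), (2 4), (1 3)(2 4)}`, `V_t = {id, (1 2), (3 4), (1 2)(3 4)}`. -/
noncomputable def yt : MonoidAlgebra ℝ (Equiv.Perm (Fin 4)) :=
  (MonoidAlgebra.single 1 1 + MonoidAlgebra.single (Equiv.swap 0 2) 1 +
     MonoidAlgebra.single (Equiv.swap 1 3) 1 +
     MonoidAlgebra.single (Equiv.swap 0 2 * Equiv.swap 1 3) 1) *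
  (MonoidAlgebra.single 1 1 - MonoidAlgebra.single (Equiv.swap 0 1) 1 -
     MonoidAlgebra.single (Equiv.swap 2 3) 1 +
     MonoidAlgebra.single (Equiv.swap 0 1 * Equiv.swap 2 3) 1)
/-- `ξ_ν := (1/3)(id + ν·(2 3) + (1−ν)·(1 2) − ν·(1 2 3) + (ν−1)·(1 3 2) − (1 3)) ∈ ℝ[S_3]`,
with `0`-based indices in `Fin 3`; `finRotate 3` is the cycle `(1 2 3)`. -/
noncomputable def xi (ν : ℝ) : MonoidAlgebra ℝ (Equiv.Perm (Fin 3)) :=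
  (1/3 : ℝ) • (MonoidAlgebra.single 1 1 + MonoidAlgebra.single (Equiv.swap 1 2) ν +
    MonoidAlgebra.single (Equiv.swap 0 1) (1 - ν) - MonoidAlgebra.single (finRotate 3) ν +
    MonoidAlgebra.single (finRotate 3)⁻¹ (ν - 1) - MonoidAlgebra.single (Equiv.swap 0 2) 1)
/-- `η := (1/3)(id − (1 2) − (1 2 3) + (1 3)) ∈ ℝ[S_3]`, with `0`-based indices in `Fin 3`. -/
noncomputable def eta : MonoidAlgebra ℝ (Equiv.Perm (Fin 3)) :=
  (1/3 : ℝ) • (MonoidAlgebra.single 1 1 - MonoidAlgebra.single (Equiv.swap 0 1) 1 -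
    MonoidAlgebra.single (finRotate 3) 1 + MonoidAlgebra.single (Equiv.swap 0 2) 1)

/-- The algebra embedding `ι : ℝ[S_3] → ℝ[S_4]` induced by the group embedding
`S_3 → S_4` fixing the last point (given by the embedding `Fin 3 ↪ Fin 4`). -/
noncomputable def iota :
    MonoidAlgebra ℝ (Equiv.Perm (Fin 3)) →+* MonoidAlgebra ℝ (Equiv.Perm (Fin 4)) :=
  MonoidAlgebra.mapDomainRingHom ℝ (Equiv.Perm.viaEmbeddingHom (Fin.castSuccEmb))

/- ======== infrastructure ======== -/

lemma via3 (e : Equiv.Perm (Fin 3)) (g : Equiv.Perm (Fin 4))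
    (h : ∀ i : Fin 3, g (Fin.castSuccEmb i) = Fin.castSuccEmb (e i))
    (h3 : g (Fin.last 3) = Fin.last 3) :
    e.viaEmbedding Fin.castSuccEmb = g := by
  ext x
  refine Fin.lastCases ?_ (fun i => ?_) x
  · rw [Equiv.Perm.viaEmbedding_apply_of_notMem, h3]
    rintro ⟨y, hy⟩
    have hy' : (Fin.castSucc y : Fin 4) = Fin.last 3 := hy
    exact absurd hy' (Fin.castSucc_lt_last y).ne
  · have hc : (i.castSucc : Fin 4) = Fin.castSuccEmb i := rfl
    rw [hc, Equiv.Perm.viaEmbedding_apply, h]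

noncomputable def eP (g : Equiv.Perm (Fin 4)) : MonoidAlgebra ℝ (Equiv.Perm (Fin 4)) :=
  MonoidAlgebra.single g 1

lemma eP_mul (g h : Equiv.Perm (Fin 4)) : eP g * eP h = eP (g * h) := by
  simp [eP, MonoidAlgebra.single_mul_single]

lemma single_eq_smul (g : Equiv.Perm (Fin 4)) (c : ℝ) :
    MonoidAlgebra.single g c = c • eP g := by
  simp [eP, MonoidAlgebra.smul_single']

lemma astar_add {r} (a b : MonoidAlgebra ℝ (Equiv.Perm (Fin r))) :
    astar (a + b) = astar a + astar b := by
  ext p; simp [astar]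

lemma astar_sub {r} (a b : MonoidAlgebra ℝ (Equiv.Perm (Fin r))) :
    astar (a - b) = astar a - astar b := by
  ext p; simp [astar]

lemma astar_single {r} (g : Equiv.Perm (Fin r)) (c : ℝ) :
    astar (MonoidAlgebra.single g c) = MonoidAlgebra.single g⁻¹ c := by
  ext p
  simp [astar, MonoidAlgebra.coeff_single, Finsupp.single_apply, inv_eq_iff_eq_inv]

lemma astar_eP (g : Equiv.Perm (Fin 4)) : astar (eP g) = eP g⁻¹ := astar_single g 1

lemma iota_def (x : MonoidAlgebra ℝ (Equiv.Perm (Fin 3))) :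
    iota x = MonoidAlgebra.mapDomain (Equiv.Perm.viaEmbeddingHom (Fin.castSuccEmb)) x := rfl

lemma iota_smul (c : ℝ) (x : MonoidAlgebra ℝ (Equiv.Perm (Fin 3))) :
    iota (c • x) = c • iota x := by
  rw [iota_def, iota_def, MonoidAlgebra.mapDomain_smul]

lemma iota_single (g : Equiv.Perm (Fin 3)) (c : ℝ) :
    iota (MonoidAlgebra.single g c) =
      MonoidAlgebra.single (g.viaEmbedding Fin.castSuccEmb) c := by
  rw [iota_def, MonoidAlgebra.mapDomain_single]; rfl

lemma evP (g : Equiv.Perm (Fin 4)) (hg : ¬ g = 1) : (eP g).coeff (1 : Equiv.Perm (Fin 4)) = 0 := by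
  simp [eP, MonoidAlgebra.coeff_single, Finsupp.single_apply, hg]

lemma ev1 : (eP 1).coeff (1 : Equiv.Perm (Fin 4)) = 1 := by
  simp [eP, MonoidAlgebra.coeff_single, Finsupp.single_apply]

lemma MAadd_apply (a b : MonoidAlgebra ℝ (Equiv.Perm (Fin 4))) (x : Equiv.Perm (Fin 4)) :
    (a + b).coeff x = a.coeff x + b.coeff x := rfl
lemma MAsub_apply (a b : MonoidAlgebra ℝ (Equiv.Perm (Fin 4))) (x : Equiv.Perm (Fin 4)) :
    (a - b).coeff x = a.coeff x - b.coeff x := rfl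
lemma MAsmul_apply (c : ℝ) (a : MonoidAlgebra ℝ (Equiv.Perm (Fin 4))) (x : Equiv.Perm (Fin 4)) :
    (c • a).coeff x = c * a.coeff x := rfl
lemma MAzero_apply (x : Equiv.Perm (Fin 4)) : (0 : MonoidAlgebra ℝ (Equiv.Perm (Fin 4))).coeff x = 0 := rfl


lemma iota_single' (g : Equiv.Perm (Fin 3)) (c : ℝ) :
    iota (MonoidAlgebra.single g c) = c • eP (g.viaEmbedding Fin.castSuccEmb) := by
  rw [iota_single, single_eq_smul]

def P0132 : Equiv.Perm (Fin 4) := Equiv.swap (2:Fin 4) 3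
def P0213 : Equiv.Perm (Fin 4) := Equiv.swap (1:Fin 4) 2
def P0231 : Equiv.Perm (Fin 4) := Equiv.swap (1:Fin 4) 2 * Equiv.swap 2 3
def P0312 : Equiv.Perm (Fin 4) := Equiv.swap (1:Fin 4) 3 * Equiv.swap 3 2
def P0321 : Equiv.Perm (Fin 4) := Equiv.swap (1:Fin 4) 3
def P1023 : Equiv.Perm (Fin 4) := Equiv.swap (0:Fin 4) 1
def P1032 : Equiv.Perm (Fin 4) := Equiv.swap (0:Fin 4) 1 * Equiv.swap 2 3
def P1203 : Equiv.Perm (Fin 4) := Equiv.swap (0:Fin 4) 1 * Equiv.swap 1 2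
def P1230 : Equiv.Perm (Fin 4) := Equiv.swap (0:Fin 4) 1 * Equiv.swap 1 2 * Equiv.swap 2 3
def P1302 : Equiv.Perm (Fin 4) := Equiv.swap (0:Fin 4) 1 * Equiv.swap 1 3 * Equiv.swap 3 2
def P1320 : Equiv.Perm (Fin 4) := Equiv.swap (0:Fin 4) 1 * Equiv.swap 1 3
def P2013 : Equiv.Perm (Fin 4) := Equiv.swap (0:Fin 4) 2 * Equiv.swap 2 1
def P2031 : Equiv.Perm (Fin 4) := Equiv.swap (0:Fin 4) 2 * Equiv.swap 2 3 * Equiv.swap 3 1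
def P2103 : Equiv.Perm (Fin 4) := Equiv.swap (0:Fin 4) 2
def P2130 : Equiv.Perm (Fin 4) := Equiv.swap (0:Fin 4) 2 * Equiv.swap 2 3
def P2301 : Equiv.Perm (Fin 4) := Equiv.swap (0:Fin 4) 2 * Equiv.swap 1 3
def P2310 : Equiv.Perm (Fin 4) := Equiv.swap (0:Fin 4) 2 * Equiv.swap 2 1 * Equiv.swap 1 3
def P3012 : Equiv.Perm (Fin 4) := Equiv.swap (0:Fin 4) 3 * Equiv.swap 3 2 * Equiv.swap 2 1
def P3021 : Equiv.Perm (Fin 4) := Equiv.swap (0:Fin 4) 3 * Equiv.swap 3 1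
def P3102 : Equiv.Perm (Fin 4) := Equiv.swap (0:Fin 4) 3 * Equiv.swap 3 2
def P3120 : Equiv.Perm (Fin 4) := Equiv.swap (0:Fin 4) 3
def P3201 : Equiv.Perm (Fin 4) := Equiv.swap (0:Fin 4) 3 * Equiv.swap 3 1 * Equiv.swap 1 2
def P3210 : Equiv.Perm (Fin 4) := Equiv.swap (0:Fin 4) 3 * Equiv.swap 1 2

lemma m_P0132_P0213 : P0132 * P0213 = P0312 := by decide
lemma m_P0132_P1023 : P0132 * P1023 = P1032 := by decide
lemma m_P0132_P1203 : P0132 * P1203 = P1302 := by decide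
lemma m_P0132_P2013 : P0132 * P2013 = P3012 := by decide
lemma m_P0132_P2103 : P0132 * P2103 = P3102 := by decide
lemma m_P0231_P0213 : P0231 * P0213 = P0321 := by decide
lemma m_P0231_P1023 : P0231 * P1023 = P2031 := by decide
lemma m_P0231_P1203 : P0231 * P1203 = P2301 := by decide
lemma m_P0231_P2013 : P0231 * P2013 = P3021 := by decide
lemma m_P0231_P2103 : P0231 * P2103 = P3201 := by decide
lemma m_P0321_P0132 : P0321 * P0132 = P0312 := by decide
lemma m_P0321_P0213 : P0321 * P0213 = P0231 := by decide
lemma m_P0321_P1023 : P0321 * P1023 = P3021 := by decide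
lemma m_P0321_P1032 : P0321 * P1032 = P3012 := by decide
lemma m_P0321_P1203 : P0321 * P1203 = P3201 := by decide
lemma m_P0321_P2013 : P0321 * P2013 = P2031 := by decide
lemma m_P0321_P2103 : P0321 * P2103 = P2301 := by decide
lemma m_P1023_P0213 : P1023 * P0213 = P1203 := by decide
lemma m_P1023_P1023 : P1023 * P1023 = 1 := by decide
lemma m_P1023_P1203 : P1023 * P1203 = P0213 := by decide
lemma m_P1023_P2013 : P1023 * P2013 = P2103 := by decide
lemma m_P1023_P2103 : P1023 * P2103 = P2013 := by decide
lemma m_P1032_P0213 : P1032 * P0213 = P1302 := by decide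
lemma m_P1032_P1023 : P1032 * P1023 = P0132 := by decide
lemma m_P1032_P1203 : P1032 * P1203 = P0312 := by decide
lemma m_P1032_P2013 : P1032 * P2013 = P3102 := by decide
lemma m_P1032_P2103 : P1032 * P2103 = P3012 := by decide
lemma m_P1230_P0213 : P1230 * P0213 = P1320 := by decide
lemma m_P1230_P1023 : P1230 * P1023 = P2130 := by decide
lemma m_P1230_P1203 : P1230 * P1203 = P2310 := by decide
lemma m_P1230_P2013 : P1230 * P2013 = P3120 := by decide
lemma m_P1230_P2103 : P1230 * P2103 = P3210 := by decide
lemma m_P1320_P0213 : P1320 * P0213 = P1230 := by decide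
lemma m_P1320_P1023 : P1320 * P1023 = P3120 := by decide
lemma m_P1320_P1203 : P1320 * P1203 = P3210 := by decide
lemma m_P1320_P2013 : P1320 * P2013 = P2130 := by decide
lemma m_P1320_P2103 : P1320 * P2103 = P2310 := by decide
lemma m_P2013_P0213 : P2013 * P0213 = P2103 := by decide
lemma m_P2013_P1023 : P2013 * P1023 = P0213 := by decide
lemma m_P2013_P1203 : P2013 * P1203 = 1 := by decide
lemma m_P2013_P2013 : P2013 * P2013 = P1203 := by decide
lemma m_P2013_P2103 : P2013 * P2103 = P1023 := by decide
lemma m_P2103_P0132 : P2103 * P0132 = P2130 := by decide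
lemma m_P2103_P0213 : P2103 * P0213 = P2013 := by decide
lemma m_P2103_P1023 : P2103 * P1023 = P1203 := by decide
lemma m_P2103_P1032 : P2103 * P1032 = P1230 := by decide
lemma m_P2103_P1203 : P2103 * P1203 = P1023 := by decide
lemma m_P2103_P2013 : P2103 * P2013 = P0213 := by decide
lemma m_P2103_P2103 : P2103 * P2103 = 1 := by decide
lemma m_P2301_P0132 : P2301 * P0132 = P2310 := by decide
lemma m_P2301_P0213 : P2301 * P0213 = P2031 := by decide
lemma m_P2301_P1023 : P2301 * P1023 = P3201 := by decide
lemma m_P2301_P1032 : P2301 * P1032 = P3210 := by decide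
lemma m_P2301_P1203 : P2301 * P1203 = P3021 := by decide
lemma m_P2301_P2013 : P2301 * P2013 = P0231 := by decide
lemma m_P2301_P2103 : P2301 * P2103 = P0321 := by decide
lemma m_P2310_P0213 : P2310 * P0213 = P2130 := by decide
lemma m_P2310_P1023 : P2310 * P1023 = P3210 := by decide
lemma m_P2310_P1203 : P2310 * P1203 = P3120 := by decide
lemma m_P2310_P2013 : P2310 * P2013 = P1230 := by decide
lemma m_P2310_P2103 : P2310 * P2103 = P1320 := by decide
lemma m_P3012_P0213 : P3012 * P0213 = P3102 := by decide
lemma m_P3012_P1023 : P3012 * P1023 = P0312 := by decide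
lemma m_P3012_P1203 : P3012 * P1203 = P0132 := by decide
lemma m_P3012_P2013 : P3012 * P2013 = P1302 := by decide
lemma m_P3012_P2103 : P3012 * P2103 = P1032 := by decide
lemma m_P3102_P0213 : P3102 * P0213 = P3012 := by decide
lemma m_P3102_P1023 : P3102 * P1023 = P1302 := by decide
lemma m_P3102_P1203 : P3102 * P1203 = P1032 := by decide
lemma m_P3102_P2013 : P3102 * P2013 = P0312 := by decide
lemma m_P3102_P2103 : P3102 * P2103 = P0132 := by decide
lemma m_P3201_P0213 : P3201 * P0213 = P3021 := by decide
lemma m_P3201_P1023 : P3201 * P1023 = P2301 := by decide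
lemma m_P3201_P1203 : P3201 * P1203 = P2031 := by decide
lemma m_P3201_P2013 : P3201 * P2013 = P0321 := by decide
lemma m_P3201_P2103 : P3201 * P2103 = P0231 := by decide
lemma m_P3210_P0213 : P3210 * P0213 = P3120 := by decide
lemma m_P3210_P1023 : P3210 * P1023 = P2310 := by decide
lemma m_P3210_P1203 : P3210 * P1203 = P2130 := by decide
lemma m_P3210_P2013 : P3210 * P2013 = P1320 := by decide
lemma m_P3210_P2103 : P3210 * P2103 = P1230 := by decide
lemma i_P0132 : (P0132)⁻¹ = P0132 := by decide
lemma i_P0312 : (P0312)⁻¹ = P0231 := by decide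
lemma i_P0321 : (P0321)⁻¹ = P0321 := by decide
lemma i_P1023 : (P1023)⁻¹ = P1023 := by decide
lemma i_P1032 : (P1032)⁻¹ = P1032 := by decide
lemma i_P1203 : (P1203)⁻¹ = P2013 := by decide
lemma i_P1230 : (P1230)⁻¹ = P3012 := by decide
lemma i_P2103 : (P2103)⁻¹ = P2103 := by decide
lemma i_P2130 : (P2130)⁻¹ = P3102 := by decide
lemma i_P2301 : (P2301)⁻¹ = P2301 := by decide
lemma i_P2310 : (P2310)⁻¹ = P3201 := by decide
lemma i_P3012 : (P3012)⁻¹ = P1230 := by decide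
lemma i_P3021 : (P3021)⁻¹ = P1320 := by decide
lemma i_P3201 : (P3201)⁻¹ = P2310 := by decide
lemma i_P3210 : (P3210)⁻¹ = P3210 := by decide

lemma ev_P0132 : (eP P0132).coeff (1 : Equiv.Perm (Fin 4)) = 0 := evP _ (by decide)
lemma ev_P0213 : (eP P0213).coeff (1 : Equiv.Perm (Fin 4)) = 0 := evP _ (by decide)
lemma ev_P0231 : (eP P0231).coeff (1 : Equiv.Perm (Fin 4)) = 0 := evP _ (by decide)
lemma ev_P0312 : (eP P0312).coeff (1 : Equiv.Perm (Fin 4)) = 0 := evP _ (by decide)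
lemma ev_P0321 : (eP P0321).coeff (1 : Equiv.Perm (Fin 4)) = 0 := evP _ (by decide)
lemma ev_P1023 : (eP P1023).coeff (1 : Equiv.Perm (Fin 4)) = 0 := evP _ (by decide)
lemma ev_P1032 : (eP P1032).coeff (1 : Equiv.Perm (Fin 4)) = 0 := evP _ (by decide)
lemma ev_P1203 : (eP P1203).coeff (1 : Equiv.Perm (Fin 4)) = 0 := evP _ (by decide)
lemma ev_P1230 : (eP P1230).coeff (1 : Equiv.Perm (Fin 4)) = 0 := evP _ (by decide)
lemma ev_P1302 : (eP P1302).coeff (1 : Equiv.Perm (Fin 4)) = 0 := evP _ (by decide)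
lemma ev_P1320 : (eP P1320).coeff (1 : Equiv.Perm (Fin 4)) = 0 := evP _ (by decide)
lemma ev_P2013 : (eP P2013).coeff (1 : Equiv.Perm (Fin 4)) = 0 := evP _ (by decide)
lemma ev_P2031 : (eP P2031).coeff (1 : Equiv.Perm (Fin 4)) = 0 := evP _ (by decide)
lemma ev_P2103 : (eP P2103).coeff (1 : Equiv.Perm (Fin 4)) = 0 := evP _ (by decide)
lemma ev_P2130 : (eP P2130).coeff (1 : Equiv.Perm (Fin 4)) = 0 := evP _ (by decide)
lemma ev_P2301 : (eP P2301).coeff (1 : Equiv.Perm (Fin 4)) = 0 := evP _ (by decide)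
lemma ev_P2310 : (eP P2310).coeff (1 : Equiv.Perm (Fin 4)) = 0 := evP _ (by decide)
lemma ev_P3012 : (eP P3012).coeff (1 : Equiv.Perm (Fin 4)) = 0 := evP _ (by decide)
lemma ev_P3021 : (eP P3021).coeff (1 : Equiv.Perm (Fin 4)) = 0 := evP _ (by decide)
lemma ev_P3102 : (eP P3102).coeff (1 : Equiv.Perm (Fin 4)) = 0 := evP _ (by decide)
lemma ev_P3120 : (eP P3120).coeff (1 : Equiv.Perm (Fin 4)) = 0 := evP _ (by decide)
lemma ev_P3201 : (eP P3201).coeff (1 : Equiv.Perm (Fin 4)) = 0 := evP _ (by decide)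
lemma ev_P3210 : (eP P3210).coeff (1 : Equiv.Perm (Fin 4)) = 0 := evP _ (by decide)

lemma via_one : ((1 : Equiv.Perm (Fin 3))).viaEmbedding Fin.castSuccEmb = 1 :=
  via3 _ _ (by decide) (by decide)
lemma via_s12 : (Equiv.swap (1:Fin 3) 2).viaEmbedding Fin.castSuccEmb = P0213 :=
  via3 _ _ (by decide) (by decide)
lemma via_s01 : (Equiv.swap (0:Fin 3) 1).viaEmbedding Fin.castSuccEmb = P1023 :=
  via3 _ _ (by decide) (by decide)
lemma via_rot : ((finRotate 3)).viaEmbedding Fin.castSuccEmb = P1203 :=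
  via3 _ _ (by decide) (by decide)
lemma via_roti : ((finRotate 3)⁻¹).viaEmbedding Fin.castSuccEmb = P2013 :=
  via3 _ _ (by decide) (by decide)
lemma via_s02 : (Equiv.swap (0:Fin 3) 2).viaEmbedding Fin.castSuccEmb = P2103 :=
  via3 _ _ (by decide) (by decide)

lemma yt_expand : yt =
    eP 1 - eP P1023 - eP P0132 + eP P1032 + eP P2103 - eP P1203 - eP P2130 + eP P1230 + eP P0321 - eP P3021 - eP P0312 + eP P3012 + eP P2301 - eP P3201 - eP P2310 + eP P3210 := by
  show (eP 1 + eP P2103 + eP P0321 + eP P2301) * (eP 1 - eP P1023 - eP P0132 + eP P1032) = _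
  simp only [m_P0132_P0213, m_P0132_P1023, m_P0132_P1203, m_P0132_P2013, m_P0132_P2103, m_P0231_P0213, m_P0231_P1023, m_P0231_P1203, m_P0231_P2013, m_P0231_P2103, m_P0321_P0132, m_P0321_P0213, m_P0321_P1023, m_P0321_P1032, m_P0321_P1203, m_P0321_P2013, m_P0321_P2103, m_P1023_P0213, m_P1023_P1023, m_P1023_P1203, m_P1023_P2013, m_P1023_P2103, m_P1032_P0213, m_P1032_P1023, m_P1032_P1203, m_P1032_P2013, m_P1032_P2103, m_P1230_P0213, m_P1230_P1023, m_P1230_P1203, m_P1230_P2013, m_P1230_P2103, m_P1320_P0213, m_P1320_P1023, m_P1320_P1203, m_P1320_P2013, m_P1320_P2103, m_P2013_P0213, m_P2013_P1023, m_P2013_P1203, m_P2013_P2013, m_P2013_P2103, m_P2103_P0132, m_P2103_P0213, m_P2103_P1023, m_P2103_P1032, m_P2103_P1203, m_P2103_P2013, m_P2103_P2103, m_P2301_P0132, m_P2301_P0213, m_P2301_P1023, m_P2301_P1032, m_P2301_P1203, m_P2301_P2013, m_P2301_P2103, m_P2310_P0213, m_P2310_P1023, m_P2310_P1203, m_P2310_P2013,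 m_P2310_P2103, m_P3012_P0213, m_P3012_P1023, m_P3012_P1203, m_P3012_P2013, m_P3012_P2103, m_P3102_P0213, m_P3102_P1023, m_P3102_P1203, m_P3102_P2013, m_P3102_P2103, m_P3201_P0213, m_P3201_P1023, m_P3201_P1203, m_P3201_P2013, m_P3201_P2103, m_P3210_P0213, m_P3210_P1023, m_P3210_P1203, m_P3210_P2013, m_P3210_P2103, mul_add, add_mul, mul_sub, sub_mul, eP_mul, one_mul, mul_one]
  all_goals module

lemma astar_yt : astar yt =
    eP 1 - eP P1023 - eP P0132 + eP P1032 + eP P2103 - eP P2013 - eP P3102 + eP P3012 + eP P0321 - eP P1320 - eP P0231 + eP P1230 + eP P2301 - eP P2310 - eP P3201 + eP P3210 := by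
  rw [yt_expand]
  simp only [astar_add, astar_sub, astar_eP, i_P0132, i_P0312, i_P0321, i_P1023, i_P1032, i_P1203, i_P1230, i_P2103, i_P2130, i_P2301, i_P2310, i_P3012, i_P3021, i_P3201, i_P3210, inv_one]
  all_goals module

lemma iota_eta : iota eta = (1/3 : ℝ) • (eP 1 - eP P1023 - eP P1203 + eP P2103) := by
  simp only [eta, iota_smul, map_add, map_sub, iota_single', via_one, via_s12, via_s01, via_rot, via_roti, via_s02]
  all_goals module

lemma iota_xi (ν : ℝ) : iota (xi ν) = (1/3 : ℝ) • (eP 1 + ν • eP P0213 + (1 - ν) • eP P1023 - ν • eP P1203 + (ν - 1) • eP P2013 - eP P2103) := by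
  simp only [xi, iota_smul, map_add, map_sub, iota_single', via_one, via_s12, via_s01, via_rot, via_roti, via_s02]
  all_goals module

lemma rho_eq : astar yt * iota eta =
    (4/3 : ℝ) • eP 1 + (-4/3 : ℝ) • eP P0132 + (2/3 : ℝ) • eP P0213 + (-2/3 : ℝ) • eP P0231 + (-2/3 : ℝ) • eP P0312 + (2/3 : ℝ) • eP P0321 + (-4/3 : ℝ) • eP P1023 + (4/3 : ℝ) • eP P1032 + (-2/3 : ℝ) • eP P1203 + (2/3 : ℝ) • eP P1230 + (2/3 : ℝ) • eP P1302 + (-2/3 : ℝ) • eP P1320 + (-2/3 : ℝ) • eP P2013 + (2/3 : ℝ) • eP P2031 + (2/3 : ℝ) • eP P2103 + (-2/3 : ℝ) • eP P2130 + (4/3 : ℝ) • eP P2301 + (-4/3 : ℝ) • eP P2310 + (2/3 : ℝ) • eP P3012 + (-2/3 : ℝ) • eP P3021 + (-2/3 : ℝ) • eP P3102 + (2/3 : ℝ) • eP P3120 + (-4/3 : ℝ) • eP P3201 + (4/3 : ℝ) • eP P3210 := by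
  rw [astar_yt, iota_eta]
  simp only [mul_smul_comm, smul_mul_assoc, mul_add, add_mul, mul_sub, sub_mul, eP_mul, one_mul, mul_one, m_P0132_P0213, m_P0132_P1023, m_P0132_P1203, m_P0132_P2013, m_P0132_P2103, m_P0231_P0213, m_P0231_P1023, m_P0231_P1203, m_P0231_P2013, m_P0231_P2103, m_P0321_P0132, m_P0321_P0213, m_P0321_P1023, m_P0321_P1032, m_P0321_P1203, m_P0321_P2013, m_P0321_P2103, m_P1023_P0213, m_P1023_P1023, m_P1023_P1203, m_P1023_P2013, m_P1023_P2103, m_P1032_P0213, m_P1032_P1023, m_P1032_P1203, m_P1032_P2013, m_P1032_P2103, m_P1230_P0213, m_P1230_P1023, m_P1230_P1203, m_P1230_P2013, m_P1230_P2103, m_P1320_P0213, m_P1320_P1023, m_P1320_P1203, m_P1320_P2013, m_P1320_P2103, m_P2013_P0213, m_P2013_P1023, m_P2013_P1203, m_P2013_P2013, m_P2013_P2103, m_P2103_P0132, m_P2103_P0213, m_P2103_P1023, m_P2103_P1032, m_P2103_P1203, m_P2103_P2013, m_P2103_P2103, m_P2301_P0132, m_P2301_P0213, m_P2301_P1023,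 m_P2301_P1032, m_P2301_P1203, m_P2301_P2013, m_P2301_P2103, m_P2310_P0213, m_P2310_P1023, m_P2310_P1203, m_P2310_P2013, m_P2310_P2103, m_P3012_P0213, m_P3012_P1023, m_P3012_P1203, m_P3012_P2013, m_P3012_P2103, m_P3102_P0213, m_P3102_P1023, m_P3102_P1203, m_P3102_P2013, m_P3102_P2103, m_P3201_P0213, m_P3201_P1023, m_P3201_P1203, m_P3201_P2013, m_P3201_P2103, m_P3210_P0213, m_P3210_P1023, m_P3210_P1203, m_P3210_P2013, m_P3210_P2103]
  all_goals module

lemma sigma_eq (ν : ℝ) : astar yt * iota (xi ν) =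
    ((-1/3 : ℝ) + (2/3) * ν) • eP 1 + ((1/3 : ℝ) + (-2/3) * ν) • eP P0132 + ((-2/3 : ℝ) + (4/3) * ν) • eP P0213 + ((-1/3 : ℝ) + (2/3) * ν) • eP P0231 + ((2/3 : ℝ) + (-4/3) * ν) • eP P0312 + ((1/3 : ℝ) + (-2/3) * ν) • eP P0321 + ((1/3 : ℝ) + (-2/3) * ν) • eP P1023 + ((-1/3 : ℝ) + (2/3) * ν) • eP P1032 + ((2/3 : ℝ) + (-4/3) * ν) • eP P1203 + ((1/3 : ℝ) + (-2/3) * ν) • eP P1230 + ((-2/3 : ℝ) + (4/3) * ν) • eP P1302 + ((-1/3 : ℝ) + (2/3) * ν) • eP P1320 + ((-1/3 : ℝ) + (2/3) * ν) • eP P2013 + ((-2/3 : ℝ) + (4/3) * ν) • eP P2031 + ((1/3 : ℝ) + (-2/3) * ν) • eP P2103 + ((2/3 : ℝ) + (-4/3) * ν) • eP P2130 + ((-1/3 : ℝ) + (2/3) * ν) • eP P2301 + ((1/3 : ℝ) + (-2/3) * ν) • eP P2310 + ((1/3 : ℝ) + (-2/3) * ν) • eP P3012 + ((2/3 : ℝ)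 + (-4/3) * ν) • eP P3021 + ((-1/3 : ℝ) + (2/3) * ν) • eP P3102 + ((-2/3 : ℝ) + (4/3) * ν) • eP P3120 + ((1/3 : ℝ) + (-2/3) * ν) • eP P3201 + ((-1/3 : ℝ) + (2/3) * ν) • eP P3210 := by
  rw [astar_yt, iota_xi]
  simp only [mul_smul_comm, smul_mul_assoc, mul_add, add_mul, mul_sub, sub_mul, eP_mul, one_mul, mul_one, m_P0132_P0213, m_P0132_P1023, m_P0132_P1203, m_P0132_P2013, m_P0132_P2103, m_P0231_P0213, m_P0231_P1023, m_P0231_P1203, m_P0231_P2013, m_P0231_P2103, m_P0321_P0132, m_P0321_P0213, m_P0321_P1023, m_P0321_P1032, m_P0321_P1203, m_P0321_P2013, m_P0321_P2103, m_P1023_P0213, m_P1023_P1023, m_P1023_P1203, m_P1023_P2013, m_P1023_P2103, m_P1032_P0213, m_P1032_P1023, m_P1032_P1203, m_P1032_P2013, m_P1032_P2103, m_P1230_P0213, m_P1230_P1023, m_P1230_P1203, m_P1230_P2013, m_P1230_P2103, m_P1320_P0213, m_P1320_P1023, m_P1320_P1203, m_P1320_P2013, m_P1320_P2103, m_P2013_P0213,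 m_P2013_P1023, m_P2013_P1203, m_P2013_P2013, m_P2013_P2103, m_P2103_P0132, m_P2103_P0213, m_P2103_P1023, m_P2103_P1032, m_P2103_P1203, m_P2103_P2013, m_P2103_P2103, m_P2301_P0132, m_P2301_P0213, m_P2301_P1023, m_P2301_P1032, m_P2301_P1203, m_P2301_P2013, m_P2301_P2103, m_P2310_P0213, m_P2310_P1023, m_P2310_P1203, m_P2310_P2013, m_P2310_P2103, m_P3012_P0213, m_P3012_P1023, m_P3012_P1203, m_P3012_P2013, m_P3012_P2103, m_P3102_P0213, m_P3102_P1023, m_P3102_P1203, m_P3102_P2013, m_P3102_P2103, m_P3201_P0213, m_P3201_P1023, m_P3201_P1203, m_P3201_P2013, m_P3201_P2103, m_P3210_P0213, m_P3210_P1023, m_P3210_P1203, m_P3210_P2013, m_P3210_P2103]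
  all_goals module

/-- `ρ := y_t*·ι(η)` is nonzero, and `σ_ν := y_t*·ι(ξ_ν)` is nonzero iff
`ν ≠ 1/2`. -/
theorem stmt_10 :
    astar yt * iota eta ≠ 0 ∧
    ∀ ν : ℝ, astar yt * iota (xi ν) ≠ 0 ↔ ν ≠ 1/2 := by
  constructor
  · intro h
    rw [rho_eq] at h
    have h1 := congrArg (fun f : MonoidAlgebra ℝ (Equiv.Perm (Fin 4)) => f.coeff 1) h
    simp only [MAadd_apply, MAsub_apply, MAsmul_apply, MAzero_apply, ev1, ev_P0132, ev_P0213, ev_P0231, ev_P0312, ev_P0321, ev_P1023, ev_P1032, ev_P1203, ev_P1230, ev_P1302, ev_P1320, ev_P2013, ev_P2031, ev_P2103, ev_P2130, ev_P2301, ev_P2310, ev_P3012, ev_P3021, ev_P3102, ev_P3120, ev_P3201, ev_P3210,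
      mul_zero, mul_one, add_zero, zero_add] at h1
    norm_num at h1
  · intro ν
    constructor
    · intro hne h12
      exact hne (by rw [sigma_eq, h12]; module)
    · intro hne h0
      rw [sigma_eq] at h0
      have h1 := congrArg (fun f : MonoidAlgebra ℝ (Equiv.Perm (Fin 4)) => f.coeff 1) h0
      simp only [MAadd_apply, MAsub_apply, MAsmul_apply, MAzero_apply, ev1, ev_P0132, ev_P0213, ev_P0231, ev_P0312, ev_P0321, ev_P1023, ev_P1032, ev_P1203, ev_P1230, ev_P1302, ev_P1320, ev_P2013, ev_P2031, ev_P2103, ev_P2130, ev_P2301, ev_P2310, ev_P3012, ev_P3021, ev_P3102, ev_P3120, ev_P3201, ev_P3210,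
        mul_zero, mul_one, add_zero, zero_add] at h1
      exact hne (by linarith)
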